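/- Let N be a binary phylogenetic network. Then the following are equivalent: (i) N is tree-child; (ii) every vertex of N is visible; (iii) N has no sibling reticulations and no stack reticulations. -/

import Mathlib

/-- A (candidate) rooted phylogenetic network structure: a directed graph on a
vertex type `V` with a distinguished root and a labelling of (intended) leaves
by elements of `X`.  The combinatorial axioms are imposed by predicates below. -/
structure Network (X : Type) where
  V : Type
  arc : V → V → Prop
  root : V
  leaf : X → V

namespace Network

variable {X : Type} (N : Network X)

def parents (v : N.V) : Set N.V := {u | N.arc u v}

def children (u : N.V) : Set N.V := {v | N.arc u v}

/-- in-degree 1, out-degree 2 -/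
def IsTreeVertex (v : N.V) : Prop := (N.parents v).ncard = 1 ∧ (N.children v).ncard = 2

/-- in-degree 2, out-degree 1 -/
def IsRetic (v : N.V) : Prop := (N.parents v).ncard = 2 ∧ (N.children v).ncard = 1

/-- in-degree 1, out-degree 0 -/
def IsLeafVertex (v : N.V) : Prop := (N.parents v).ncard = 1 ∧ (N.children v).ncard = 0

def Acyclic : Prop := ∀ v : N.V, ¬ Relation.TransGen N.arc v v

/-- A well-formed binary phylogenetic network (non-degenerate case): a finite
acyclic digraph with a root of in-degree 0 and out-degree 2, leaves of
in-degree 1 and out-degree 0 bijectively labelled by `X`, and all remaining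
vertices tree vertices or reticulations. -/
def Wf : Prop :=
  Finite N.V ∧ N.Acyclic ∧
  (N.parents N.root).ncard = 0 ∧ (N.children N.root).ncard = 2 ∧
  Function.Injective N.leaf ∧
  (∀ x : X, N.IsLeafVertex (N.leaf x)) ∧
  (∀ v : N.V, v = N.root ∨ (∃ x, N.leaf x = v) ∨ N.IsTreeVertex v ∨ N.IsRetic v)

/-- The degenerate network on a single leaf: one vertex, no arcs. -/
def Degenerate : Prop :=
  (∀ v : N.V, v = N.root) ∧ (∀ u v : N.V, ¬ N.arc u v) ∧
  (∃! _x : X, True) ∧ (∀ x : X, N.leaf x = N.root)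

def IsBinaryPhylo : Prop := N.Wf ∨ N.Degenerate

/-- `l` is a directed path (a list of successively adjacent vertices) from `u` to `v`. -/
def IsPathFromTo (l : List N.V) (u v : N.V) : Prop :=
  l.Chain' N.arc ∧ l.head? = some u ∧ l.getLast? = some v

/-- `v` is a descendant of `u` (equivalently, `u` is an ancestor of `v`). -/
def Desc (u v : N.V) : Prop := Relation.ReflTransGen N.arc u v

/-- The visibility set of `u`: those leaf labels `x` such that every directed
path from the root to the leaf labelled `x` traverses `u`. -/
def visSet (u : N.V) : Set X :=
  {x | ∀ l : List N.V, N.IsPathFromTo l N.root (N.leaf x) → u ∈ l}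

/-- The cluster set of `u`: leaf labels of leaves that are descendants of `u`. -/
def cluster (u : N.V) : Set X := {x | N.Desc u (N.leaf x)}

/-- A tree path from `u` to `t`: a directed path whose vertices other than the
endpoints are tree vertices. -/
def IsTreePath (l : List N.V) (u t : N.V) : Prop :=
  N.IsPathFromTo l u t ∧ ∀ v ∈ l, v ≠ u → v ≠ t → N.IsTreeVertex v

/-- Tree-child: every vertex with a child has a child that is a tree vertex or a leaf. -/
def TreeChild : Prop :=
  ∀ v : N.V, (∃ c, N.arc v c) → ∃ c, N.arc v c ∧ (N.IsTreeVertex c ∨ N.IsLeafVertex c)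

/-- Some reticulation arc `(u,v)` is a shortcut: there is a directed path from
`u` to `v` avoiding the arc `(u,v)`. -/
def HasShortcut : Prop :=
  ∃ u v, N.arc u v ∧ N.IsRetic v ∧ ∃ w, N.arc u w ∧ w ≠ v ∧ N.Desc w v

/-- Normal: tree-child with no shortcuts. -/
def IsNormal : Prop := N.TreeChild ∧ ¬ N.HasShortcut

def SiblingRetics (u v : N.V) : Prop :=
  u ≠ v ∧ N.IsRetic u ∧ N.IsRetic v ∧ ∃ p, N.arc p u ∧ N.arc p v

def StackRetics (u v : N.V) : Prop :=
  N.IsRetic u ∧ N.IsRetic v ∧ N.arc u v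

/-- `u` and `v` are near-sibling reticulations: some tree vertex `t` has as its
two children `v` and a tree vertex `s` that is a parent of `u`. -/
def NearSiblingRetics (u v : N.V) : Prop :=
  u ≠ v ∧ N.IsRetic u ∧ N.IsRetic v ∧
  ∃ t s, N.IsTreeVertex t ∧ N.IsTreeVertex s ∧ N.arc t s ∧ N.arc t v ∧ N.arc s u

/-- `u` and `v` are near-stack reticulations: the child of `u` is a tree vertex
that is a parent of `v`. -/
def NearStackRetics (u v : N.V) : Prop :=
  N.IsRetic u ∧ N.IsRetic v ∧ ∃ s, N.arc u s ∧ N.IsTreeVertex s ∧ N.arc s v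

def NoNearRetics : Prop :=
  (∀ u v, ¬ N.NearSiblingRetics u v) ∧ (∀ u v, ¬ N.NearStackRetics u v)

/-- `{a,b}` is a cherry: the leaves labelled `a` and `b` share a parent. -/
def Cherry (a b : X) : Prop :=
  a ≠ b ∧ ∃ p, N.arc p (N.leaf a) ∧ N.arc p (N.leaf b)

/-- `{a,b}` is a reticulated cherry with reticulation leaf `b`. -/
def ReticCherry (a b : X) : Prop :=
  a ≠ b ∧ ∃ pa pb, N.arc pa (N.leaf a) ∧ N.arc pb (N.leaf b) ∧
    N.IsRetic pb ∧ N.arc pa pb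

/-- `N` displays the rooted triple `xy|z`: there is a subdigraph of `N` that
is a subdivision of the rooted triple tree with `z` adjacent to the root,
i.e. vertices `p` (the root image) and `q` (the image of the parent of `x,y`)
together with internally disjoint directed paths as below. -/
def Displays (x y z : X) : Prop :=
  x ≠ y ∧ x ≠ z ∧ y ≠ z ∧
  ∃ (p q : N.V) (l0 lx ly lz : List N.V),
    p ≠ q ∧
    N.IsPathFromTo l0 p q ∧
    N.IsPathFromTo lx q (N.leaf x) ∧
    N.IsPathFromTo ly q (N.leaf y) ∧
    N.IsPathFromTo lz p (N.leaf z) ∧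
    (∀ v ∈ lx, v ∈ ly → v = q) ∧
    (∀ v ∈ l0, v ∈ lx ∨ v ∈ ly → v = q) ∧
    (∀ v ∈ lz, v ∈ l0 ∨ v ∈ lx ∨ v ∈ ly → v = p)

/-- `R(N)`: the set of rooted triples displayed by `N`, encoded as ordered
triples `(x, y, z)` standing for `xy|z`. -/
def RDisp : Set (X × X × X) := {t | N.Displays t.1 t.2.1 t.2.2}

/-- Isomorphism of networks on the same leaf set: a digraph isomorphism fixing
each leaf label. -/
def Isomorphic (N1 N2 : Network X) : Prop :=
  ∃ φ : N1.V ≃ N2.V,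
    (∀ u v, N1.arc u v ↔ N2.arc (φ u) (φ v)) ∧ (∀ x, φ (N1.leaf x) = N2.leaf x)

/-- A candidate set for `b` (relative to `a`): a non-empty subset
`W ⊆ X - {a,b}` satisfying conditions (W1)–(W5). -/
def CandidateSet (a b : X) (W : Set X) : Prop :=
  W.Nonempty ∧ a ∉ W ∧ b ∉ W ∧
  -- (W1)
  (∀ c ∈ W, ∀ x : X, x ∉ W → x ≠ b →
    N.Displays b c x ∧ ¬ N.Displays a c b) ∧
  -- (W2)
  (∀ c ∈ W, ∀ c' ∈ W, c ≠ c' → ¬ N.Displays b c c') ∧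
  -- (W3)
  (∀ c ∈ W, ∀ x : X, x ∉ W → x ≠ a → x ≠ b →
    (N.Displays c x a ↔ N.Displays b x a)) ∧
  -- (W4)
  (∀ x y : X, x ∉ W → x ≠ a → x ≠ b → y ∉ W → y ≠ a → y ≠ b →
    N.Displays b x y → ¬ N.Displays a x y → ∀ c ∈ W, N.Displays c x y) ∧
  -- (W5)
  (∀ c ∈ W, (∀ x : X, x ∉ W → x ≠ a → x ≠ b → N.Displays a c x) →
    ∀ x : X, x ∉ W → x ≠ a → x ≠ b → ¬ N.Displays a x c ∧ ¬ N.Displays a x b)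

end Network
namespace Network

section Aux

variable {X : Type} {N : Network X}

/-- cycle from an arc back plus a descent -/
lemma cyc (hAc : N.Acyclic) {u v : N.V} (h1 : N.arc v u) (h2 : N.Desc u v) : False :=
  hAc v (Relation.TransGen.head' h1 h2)

lemma cons_getLast? {a : N.V} {l : List N.V} (h : l ≠ []) :
    (a :: l).getLast? = l.getLast? := by
  cases l with
  | nil => exact absurd rfl h
  | cons b t => exact List.getLast?_cons_cons

lemma path_single (u : N.V) : N.IsPathFromTo [u] u u :=
  ⟨List.isChain_singleton u, rfl, rfl⟩

lemma path_pair {a b : N.V} (h : N.arc a b) : N.IsPathFromTo [a, b] a b :=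
  ⟨List.isChain_pair.mpr h, rfl, rfl⟩

lemma exists_path {u v : N.V} (h : N.Desc u v) : ∃ l, N.IsPathFromTo l u v := by
  induction h using Relation.ReflTransGen.head_induction_on with
  | refl => exact ⟨[v], path_single v⟩
  | head h1 h2 ih =>
    rename_i a c
    obtain ⟨l, hc, hh, hl⟩ := ih
    cases l with
    | nil => simp at hh
    | cons b t =>
      have hb : b = c := by simpa using hh
      subst hb
      exact ⟨a :: b :: t, List.isChain_cons_cons.mpr ⟨h1, hc⟩, rfl,
        by rw [List.getLast?_cons_cons]; exact hl⟩

lemma chain'_head_desc : ∀ (l : List N.V), l.Chain' N.arc →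
    ∀ h, l.head? = some h → ∀ w ∈ l, N.Desc h w := by
  intro l
  induction l with
  | nil => intro _ h hh w hw; simp at hw
  | cons a t ih =>
    intro hc h hh w hw
    have ha : h = a := by simpa using hh.symm
    subst ha
    rcases List.mem_cons.mp hw with hw | hw
    · subst hw; exact Relation.ReflTransGen.refl
    · cases t with
      | nil => simp at hw
      | cons b t' =>
        have harc : N.arc h b := (List.isChain_cons_cons.mp hc).1
        have := ih (List.isChain_cons_cons.mp hc).2 b rfl w (by simpa using hw)
        exact Relation.ReflTransGen.head harc this

lemma chain'_desc_last : ∀ (l : List N.V), l.Chain' N.arc →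
    ∀ t, l.getLast? = some t → ∀ w ∈ l, N.Desc w t := by
  intro l
  induction l with
  | nil => intro _ t ht w hw; simp at hw
  | cons a t ih =>
    intro hc tt htt w hw
    cases t with
    | nil =>
      have : tt = a := by simpa using htt.symm
      subst this
      simp at hw; subst hw; exact Relation.ReflTransGen.refl
    | cons b t' =>
      rw [List.getLast?_cons_cons] at htt
      rcases List.mem_cons.mp hw with hw | hw
      · subst hw
        have harc : N.arc w b := (List.isChain_cons_cons.mp hc).1
        have := ih (List.isChain_cons_cons.mp hc).2 tt htt b (by simp)
        exact Relation.ReflTransGen.head harc this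
      · exact ih (List.isChain_cons_cons.mp hc).2 tt htt w (by simpa using hw)

lemma mem_path_desc {l : List N.V} {u v w : N.V} (hl : N.IsPathFromTo l u v)
    (hw : w ∈ l) : N.Desc u w ∧ N.Desc w v :=
  ⟨chain'_head_desc l hl.1 u hl.2.1 w hw, chain'_desc_last l hl.1 v hl.2.2 w hw⟩

/-- composition of avoiding paths -/
lemma avoid_comp {p a b c : N.V}
    (h1 : ∃ l, N.IsPathFromTo l a b ∧ p ∉ l)
    (h2 : ∃ l, N.IsPathFromTo l b c ∧ p ∉ l) :
    ∃ l, N.IsPathFromTo l a c ∧ p ∉ l := by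
  obtain ⟨l1, ⟨hc1, hh1, hl1⟩, hp1⟩ := h1
  obtain ⟨l2, ⟨hc2, hh2, hl2⟩, hp2⟩ := h2
  cases l2 with
  | nil => simp at hh2
  | cons b' t =>
    have hb : b' = b := by simpa using hh2
    subst hb
    have hne1 : l1 ≠ [] := by rintro rfl; simp at hh1
    refine ⟨l1 ++ t, ⟨?_, ?_, ?_⟩, ?_⟩
    · refine List.isChain_append.mpr ⟨hc1, (List.isChain_cons.mp hc2).2, ?_⟩
      intro x hx y hy
      have hxe : b' = x := by rw [hl1] at hx; simpa using hx
      subst hxe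
      exact (List.isChain_cons.mp hc2).1 y hy
    · rw [List.head?_append, hh1]; rfl
    · cases t with
      | nil =>
        have : c = b' := by simpa using hl2.symm
        subst this; simpa using hl1
      | cons y t' =>
        rw [List.getLast?_append]
        rw [List.getLast?_cons_cons] at hl2
        rw [hl2]; rfl
    · intro hp
      rcases List.mem_append.mp hp with h | h
      · exact hp1 h
      · exact hp2 (by simp [h])

/-- an avoiding path exists when `p` cannot lie on any `a`–`b` path -/
lemma avoid_of_not_through {p a b : N.V} (h : N.Desc a b)
    (hp : N.Desc a p → N.Desc p b → False) :
    ∃ l, N.IsPathFromTo l a b ∧ p ∉ l := by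
  obtain ⟨l, hl⟩ := exists_path h
  refine ⟨l, hl, fun hm => ?_⟩
  obtain ⟨h1, h2⟩ := mem_path_desc hl hm
  exact hp h1 h2

lemma avoid_pair {p a b : N.V} (h : N.arc a b) (h1 : p ≠ a) (h2 : p ≠ b) :
    ∃ l, N.IsPathFromTo l a b ∧ p ∉ l :=
  ⟨[a, b], path_pair h, by simp [h1, h2]⟩

/-- predecessor of a non-head member of a path -/
lemma pred_in_path : ∀ (m : List N.V), m.Chain' N.arc →
    ∀ h, m.head? = some h → ∀ b ∈ m, b ≠ h → ∃ d ∈ m, N.arc d b := by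
  intro m
  induction m with
  | nil => intro _ h hh b hb; simp at hb
  | cons a t ih =>
    intro hc h hh b hb hbh
    have ha : h = a := by simpa using hh.symm
    subst ha
    rcases List.mem_cons.mp hb with hb | hb
    · exact absurd hb hbh
    · cases t with
      | nil => simp at hb
      | cons c t' =>
        by_cases hbc : b = c
        · subst hbc
          exact ⟨h, by simp, (List.isChain_cons_cons.mp hc).1⟩
        · obtain ⟨d, hd, hdb⟩ :=
            ih (List.isChain_cons_cons.mp hc).2 c rfl b (by simpa using hb) hbc
          exact ⟨d, by simp [hd], hdb⟩

end Aux

end Network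

/-- For a binary phylogenetic network `N`, the following are equivalent:
(i) `N` is tree-child; (ii) every vertex of `N` is visible; (iii) `N` has no
sibling reticulations and no stack reticulations. -/
theorem treechild_characterisation {X : Type} (N : Network X)
    (h : N.IsBinaryPhylo) :
    (N.TreeChild ↔ ∀ v : N.V, (N.visSet v).Nonempty) ∧
    (N.TreeChild ↔
      (∀ u v : N.V, ¬ N.SiblingRetics u v) ∧ (∀ u v : N.V, ¬ N.StackRetics u v)) := by
  rcases h with hWf | hDeg
  · obtain ⟨hFin, hAc, hrootp, hrootc, hinj, hleaf, hclass⟩ := hWf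
    haveI : Finite N.V := hFin
    -- basic consequences
    have arc_ne : ∀ {u v : N.V}, N.arc u v → u ≠ v := by
      rintro u v h rfl
      exact hAc u (Relation.TransGen.single h)
    have hrootp' : N.parents N.root = ∅ :=
      (Set.ncard_eq_zero (Set.toFinite _)).mp hrootp
    have hasParent : ∀ v : N.V, v ≠ N.root → ∃ u, N.arc u v := by
      intro v hv
      have hpos : (N.parents v).ncard ≠ 0 := by
        rcases hclass v with h | ⟨x, rfl⟩ | h | h
        · exact absurd h hv
        · rw [(hleaf x).1]; simp
        · rw [h.1]; simp
        · rw [h.1]; simp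
      obtain ⟨u, hu⟩ := Set.nonempty_of_ncard_ne_zero hpos
      exact ⟨u, hu⟩
    have htrans : IsTrans N.V (Relation.TransGen N.arc) := ⟨fun _ _ _ => .trans⟩
    have hirr : IsIrrefl N.V (Relation.TransGen N.arc) := ⟨hAc⟩
    have wfA : WellFounded (Relation.TransGen N.arc) :=
      Finite.wellFounded_of_trans_of_irrefl _
    have htrans' : IsTrans N.V (fun a b => Relation.TransGen N.arc b a) :=
      ⟨fun _ _ _ h1 h2 => h2.trans h1⟩
    have hirr' : IsIrrefl N.V (fun a b => Relation.TransGen N.arc b a) := ⟨hAc⟩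
    have wfD : WellFounded (fun a b : N.V => Relation.TransGen N.arc b a) :=
      Finite.wellFounded_of_trans_of_irrefl _
    have reach : ∀ v : N.V, N.Desc N.root v := by
      intro v
      induction v using wfA.induction with
      | _ v ih =>
        by_cases hv : v = N.root
        · subst hv; exact Relation.ReflTransGen.refl
        · obtain ⟨u, hu⟩ := hasParent v hv
          exact (ih u (Relation.TransGen.single hu)).tail hu
    have leaf_no_child : ∀ (x : X) (c : N.V), ¬ N.arc (N.leaf x) c := by
      intro x c hc
      have h0 : N.children (N.leaf x) = ∅ :=
        (Set.ncard_eq_zero (Set.toFinite _)).mp (hleaf x).2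
      have : c ∈ N.children (N.leaf x) := hc
      rw [h0] at this
      exact this
    have otherParent : ∀ {w a : N.V}, N.IsRetic w → N.arc a w →
        ∃ b, N.arc b w ∧ b ≠ a := by
      intro w a hw _
      have : 1 < (N.parents w).ncard := by rw [hw.1]; norm_num
      obtain ⟨b, hb, hba⟩ := Set.exists_ne_of_one_lt_ncard this a
      exact ⟨b, hb, hba⟩
    have singleChild : ∀ {u v : N.V}, N.IsRetic u → N.arc u v →
        ∀ c, N.arc u c → c = v := by
      intro u v hu huv c hc
      obtain ⟨a, ha⟩ := Set.ncard_eq_one.mp hu.2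
      have h1 : v ∈ N.children u := huv
      have h2 : c ∈ N.children u := hc
      rw [ha] at h1 h2
      rw [h2, h1]
    have childrenPair : ∀ {p u v : N.V}, N.arc p u → N.arc p v → u ≠ v →
        N.children p = {u, v} := by
      intro p u v hpu hpv huv
      have hsub : {u, v} ⊆ N.children p := by
        rintro c (rfl | rfl)
        · exact hpu
        · exact hpv
      have hcard : (N.children p).ncard = 2 := by
        rcases hclass p with hp | ⟨x, rfl⟩ | hp | hp
        · rw [hp]; exact hrootc
        · exact absurd hpu (leaf_no_child x u)
        · exact hp.2
        · exfalso
          have h2 : ({u, v} : Set N.V).ncard ≤ (N.children p).ncard :=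
            Set.ncard_le_ncard hsub (Set.toFinite _)
          rw [Set.ncard_pair huv, hp.2] at h2
          omega
      exact (Set.eq_of_subset_of_ncard_le hsub
        (by rw [hcard, Set.ncard_pair huv]) (Set.toFinite _)).symm
    have firstStep : ∀ {a b : N.V}, N.Desc a b → a ≠ b →
        ∃ c, N.arc a c ∧ N.Desc c b := by
      intro a b hab hne
      rcases hab.cases_head with h | h
      · exact absurd h hne
      · exact h
    -- (i) ⇒ (ii)
    have tcToVis : N.TreeChild → ∀ v : N.V, (N.visSet v).Nonempty := by
      intro hTC v
      -- visibility from a unique-parent chain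
      have visLem : ∀ (l : List N.V), l.Chain' (fun a b => N.parents b = {a}) →
          ∀ (v : N.V) (x : X), l.head? = some v → l.getLast? = some (N.leaf x) →
          ∀ m, N.IsPathFromTo m N.root (N.leaf x) → v ∈ m := by
        intro l
        induction l with
        | nil => intro _ v x hh; simp at hh
        | cons a t ih =>
          intro hc v x hh hl m hm
          have hva : a = v := by simpa using hh
          subst hva
          cases t with
          | nil =>
            have hvx : a = N.leaf x := by simpa using hl
            rw [hvx]
            exact List.mem_of_getLast? hm.2.2
          | cons b t' =>
            have hbm : b ∈ m := by
              refine ih (List.isChain_cons_cons.mp hc).2 b x rfl ?_ m hm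
              rw [← hl, List.getLast?_cons_cons]
            have hpb : N.parents b = {a} := (List.isChain_cons_cons.mp hc).1
            have hbroot : b ≠ N.root := by
              intro hb
              have hmem : a ∈ N.parents b := by rw [hpb]; rfl
              rw [hb, hrootp'] at hmem
              exact hmem
            obtain ⟨d, hdm, hdb⟩ :=
              Network.pred_in_path m hm.1 N.root hm.2.1 b hbm hbroot
            have hd : d ∈ N.parents b := hdb
            rw [hpb] at hd
            rw [← hd]
            exact hdm
      -- existence of a tree path
      have treepath : ∀ v : N.V, ∃ (x : X) (l : List N.V),
          l.Chain' (fun a b => N.parents b = {a}) ∧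
          l.head? = some v ∧ l.getLast? = some (N.leaf x) := by
        intro v
        induction v using wfD.induction with
        | _ v ih =>
          have build : (N.children v).ncard ≠ 0 → ∃ (x : X) (l : List N.V),
              l.Chain' (fun a b => N.parents b = {a}) ∧
              l.head? = some v ∧ l.getLast? = some (N.leaf x) := by
            intro hpos
            obtain ⟨c, hc⟩ := Set.nonempty_of_ncard_ne_zero hpos
            obtain ⟨c, hvc, htl⟩ := hTC v ⟨c, hc⟩
            have hpc : N.parents c = {v} := by
              have h1 : (N.parents c).ncard = 1 := by
                rcases htl with htl | htl
                · exact htl.1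
                · exact htl.1
              obtain ⟨a, ha⟩ := Set.ncard_eq_one.mp h1
              have hmm : v ∈ N.parents c := hvc
              rw [ha] at hmm ⊢
              rw [hmm]
            obtain ⟨x, l, hlc, hlh, hll⟩ := ih c (Relation.TransGen.single hvc)
            cases l with
            | nil => simp at hlh
            | cons c' t =>
              have hcc : c' = c := by simpa using hlh
              subst hcc
              refine ⟨x, v :: c' :: t, List.isChain_cons_cons.mpr ⟨hpc, hlc⟩, rfl, ?_⟩
              rw [List.getLast?_cons_cons]
              exact hll
          rcases hclass v with hv | ⟨x, rfl⟩ | hv | hv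
          · exact build (by rw [hv, hrootc]; simp)
          · exact ⟨x, [N.leaf x], List.isChain_singleton _, rfl, rfl⟩
          · exact build (by rw [hv.2]; simp)
          · exact build (by rw [hv.2]; simp)
      obtain ⟨x, l, h1, h2, h3⟩ := treepath v
      exact ⟨x, fun m hm => visLem l h1 v x h2 h3 m hm⟩
    -- helpers for (ii) ⇒ (iii)
    have visPath : ∀ (p : N.V) (x : X), x ∈ N.visSet p →
        (∃ l, N.IsPathFromTo l N.root (N.leaf x) ∧ p ∉ l) → False := by
      rintro p x hx ⟨l, hl, hp⟩
      exact hp (hx l hl)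
    have notAnc : ∀ (p : N.V) (x : X), ¬ N.Desc p (N.leaf x) →
        ∃ l, N.IsPathFromTo l N.root (N.leaf x) ∧ p ∉ l := by
      intro p x hx
      exact Network.avoid_of_not_through (reach _) (fun _ h2 => hx h2)
    -- (ii) ⇒ (iii)
    have visToNo : (∀ v : N.V, (N.visSet v).Nonempty) →
        (∀ u v : N.V, ¬ N.SiblingRetics u v) ∧ (∀ u v : N.V, ¬ N.StackRetics u v) := by
      intro hvis
      constructor
      · -- no sibling retics
        rintro u v ⟨huv, hu, hv, p, hpu, hpv⟩
        obtain ⟨x, hx⟩ := hvis p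
        have hch := childrenPair hpu hpv huv
        have step : ∀ c, N.arc p c → c = u ∨ c = v := by
          intro c hc
          have : c ∈ N.children p := hc
          rw [hch] at this
          exact this
        obtain ⟨q, hqu, hqp⟩ := otherParent hu hpu
        obtain ⟨r, hrv, hrp⟩ := otherParent hv hpv
        have sub : ∀ (u v q r : N.V), N.arc p u → N.arc p v →
            N.arc q u → q ≠ p → N.arc r v → r ≠ p →
            (∀ c, N.arc p c → c = u ∨ c = v) → ¬ N.Desc p q → False := by
          clear hch step hqu hqp hrv hrp hpu hpv huv hu hv
          intro u v q r hpu hpv hqu hqp hrv hrp step hpq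
          have hpq' : ∃ l, N.IsPathFromTo l N.root q ∧ p ∉ l :=
            Network.avoid_of_not_through (reach q) (fun _ h2 => hpq h2)
          have hqup : ∃ l, N.IsPathFromTo l q u ∧ p ∉ l :=
            Network.avoid_pair hqu hqp.symm (arc_ne hpu)
          by_cases hpx : N.Desc p (N.leaf x)
          · have hpleaf : p ≠ N.leaf x := by
              rintro rfl
              exact leaf_no_child x u hpu
            obtain ⟨c, hpc, hcx⟩ := firstStep hpx hpleaf
            rcases step c hpc with rfl | rfl
            · -- through u
              have hux : ∃ l, N.IsPathFromTo l c (N.leaf x) ∧ p ∉ l :=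
                Network.avoid_of_not_through hcx
                  (fun h1 _ => Network.cyc hAc hpc h1)
              exact visPath p x hx
                (Network.avoid_comp (Network.avoid_comp hpq' hqup) hux)
            · -- through v
              have hvx : ∃ l, N.IsPathFromTo l c (N.leaf x) ∧ p ∉ l :=
                Network.avoid_of_not_through hcx
                  (fun h1 _ => Network.cyc hAc hpc h1)
              by_cases hpr : N.Desc p r
              · have hur : N.Desc u r := by
                  have hpr' : p ≠ r := hrp.symm
                  obtain ⟨c', hpc', hc'r⟩ := firstStep hpr hpr'
                  rcases step c' hpc' with rfl | rfl
                  · exact hc'r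
                  · exact absurd hc'r (fun h => Network.cyc hAc hrv h)
                have hurp : ∃ l, N.IsPathFromTo l u r ∧ p ∉ l :=
                  Network.avoid_of_not_through hur
                    (fun h1 _ => Network.cyc hAc hpu h1)
                have hrvp : ∃ l, N.IsPathFromTo l r c ∧ p ∉ l :=
                  Network.avoid_pair hrv hrp.symm (arc_ne hpc)
                exact visPath p x hx
                  (Network.avoid_comp (Network.avoid_comp (Network.avoid_comp
                    (Network.avoid_comp hpq' hqup) hurp) hrvp) hvx)
              · have hpr' : ∃ l, N.IsPathFromTo l N.root r ∧ p ∉ l :=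
                  Network.avoid_of_not_through (reach r) (fun _ h2 => hpr h2)
                have hrvp : ∃ l, N.IsPathFromTo l r c ∧ p ∉ l :=
                  Network.avoid_pair hrv hrp.symm (arc_ne hpc)
                exact visPath p x hx
                  (Network.avoid_comp (Network.avoid_comp hpr' hrvp) hvx)
          · exact visPath p x hx (notAnc p x hpx)
        -- key: ¬ Desc p q ∨ ¬ Desc p r
        by_cases hpq : N.Desc p q
        · by_cases hpr : N.Desc p r
          · -- both: cycle
            have hvq : N.Desc v q := by
              obtain ⟨c, hpc, hcq⟩ := firstStep hpq hqp.symm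
              rcases step c hpc with rfl | rfl
              · exact absurd hcq (fun h => Network.cyc hAc hqu h)
              · exact hcq
            have hur : N.Desc u r := by
              obtain ⟨c, hpc, hcr⟩ := firstStep hpr hrp.symm
              rcases step c hpc with rfl | rfl
              · exact hcr
              · exact absurd hcr (fun h => Network.cyc hAc hrv h)
            exact hAc v ((Relation.TransGen.tail' hvq hqu).trans
              (Relation.TransGen.tail' hur hrv))
          · exact sub v u r q hpv hpu hrv hrp hqu hqp
              (fun c hc => (step c hc).symm) hpr
        · exact sub u v q r hpu hpv hqu hqp hrv hrp step hpq
      · -- no stack retics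
        rintro u v ⟨hu, hv, huv⟩
        obtain ⟨x, hx⟩ := hvis u
        obtain ⟨q, hqv, hqu⟩ := otherParent hv huv
        by_cases hux : N.Desc u (N.leaf x)
        · have huleaf : u ≠ N.leaf x := by
            rintro rfl
            exact leaf_no_child x v huv
          obtain ⟨c, huc, hcx⟩ := firstStep hux huleaf
          have hcv : c = v := singleChild hu huv c huc
          subst hcv
          have p1 : ∃ l, N.IsPathFromTo l N.root q ∧ u ∉ l := by
            refine Network.avoid_of_not_through (reach q) (fun _ huq => ?_)
            obtain ⟨c', huc', hc'q⟩ := firstStep huq hqu.symm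
            have : c' = c := singleChild hu huv c' huc'
            subst this
            exact Network.cyc hAc hqv hc'q
          have p2 : ∃ l, N.IsPathFromTo l q c ∧ u ∉ l :=
            Network.avoid_pair hqv hqu.symm (arc_ne huv)
          have p3 : ∃ l, N.IsPathFromTo l c (N.leaf x) ∧ u ∉ l :=
            Network.avoid_of_not_through hcx
              (fun h1 _ => Network.cyc hAc huv h1)
          exact visPath u x hx (Network.avoid_comp (Network.avoid_comp p1 p2) p3)
        · exact visPath u x hx (notAnc u x hux)
    -- (iii) ⇒ (i)
    have noToTc : ((∀ u v : N.V, ¬ N.SiblingRetics u v) ∧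
        (∀ u v : N.V, ¬ N.StackRetics u v)) → N.TreeChild := by
      rintro ⟨hsib, hstack⟩ v ⟨c0, hc0⟩
      by_contra hno
      push_neg at hno
      have childRetic : ∀ c, N.arc v c → N.IsRetic c := by
        intro c hc
        rcases hclass c with rfl | ⟨x, rfl⟩ | hct | hcr
        · exfalso
          have : v ∈ N.parents N.root := hc
          rw [hrootp'] at this
          exact this
        · exact absurd (hleaf x) (hno _ hc).2
        · exact absurd hct (hno _ hc).1
        · exact hcr
      rcases hclass v with rfl | ⟨x, rfl⟩ | hvt | hvr
      · -- root: two retic children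
        obtain ⟨c1, c2, h12, hch⟩ := Set.ncard_eq_two.mp hrootc
        have ha1 : N.arc N.root c1 := by
          have : c1 ∈ N.children N.root := by rw [hch]; exact Or.inl rfl
          exact this
        have ha2 : N.arc N.root c2 := by
          have : c2 ∈ N.children N.root := by rw [hch]; exact Or.inr rfl
          exact this
        exact hsib c1 c2 ⟨h12, childRetic c1 ha1, childRetic c2 ha2,
          N.root, ha1, ha2⟩
      · exact leaf_no_child x c0 hc0
      · obtain ⟨c1, c2, h12, hch⟩ := Set.ncard_eq_two.mp hvt.2
        have ha1 : N.arc v c1 := by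
          have : c1 ∈ N.children v := by rw [hch]; exact Or.inl rfl
          exact this
        have ha2 : N.arc v c2 := by
          have : c2 ∈ N.children v := by rw [hch]; exact Or.inr rfl
          exact this
        exact hsib c1 c2 ⟨h12, childRetic c1 ha1, childRetic c2 ha2, v, ha1, ha2⟩
      · exact hstack v c0 ⟨hvr, childRetic c0 hc0, hc0⟩
    exact ⟨⟨tcToVis, fun hv => noToTc (visToNo hv)⟩,
      ⟨fun htc => visToNo (tcToVis htc), noToTc⟩⟩
  · -- degenerate case
    obtain ⟨hall, hnoarc, ⟨x₀, -, -⟩, hlf⟩ := hDeg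
    have htc : N.TreeChild := by
      rintro v ⟨c, hc⟩
      exact absurd hc (hnoarc v c)
    have hvis : ∀ v : N.V, (N.visSet v).Nonempty := by
      intro v
      refine ⟨x₀, fun l hl => ?_⟩
      cases l with
      | nil => exact absurd hl.2.1 (by simp)
      | cons a t =>
        have : a = N.root := by simpa using hl.2.1
        rw [hall v, ← this]
        exact List.mem_cons_self
    have hns : (∀ u v : N.V, ¬ N.SiblingRetics u v) ∧
        (∀ u v : N.V, ¬ N.StackRetics u v) := by
      constructor
      · rintro u v ⟨-, -, -, p, hp, -⟩
        exact hnoarc p u hp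
      · rintro u v ⟨-, -, huv⟩
        exact hnoarc u v huv
    exact ⟨iff_of_true htc hvis, iff_of_true htc hns⟩
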